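/- arXiv:1704.02534 — 2 statements merged into one kernel-verified Lean document; each statement's English description precedes it below -/
import Mathlib

section
/- Let 𝒳 be a finite index set with weights pen(X) ≥ 1 satisfying Σ_{X∈𝒳} 2^{−pen(X)} ≤ 1. For each X ∈ 𝒳 let a_X(1), …, a_X(N) be reals with 0 ≤ a_X(i) ≤ Q (Q > 0). Let γ, δ ∈ (0,1) and let S_1, …, S_N be i.i.d. Bernoulli(γ). Then P[ ∃ X ∈ 𝒳 : Σ_{i=1}^N S_i a_X(i) ≤ (γ/2) Σ_{i=1}^N a_X(i) − (4Q/3)( log(1/δ) + pen(X) log 2 ) ] ≤ δ. -/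
open MeasureTheory ProbabilityTheory

noncomputable section

/-- Bernoulli measure on `Bool` with parameter `γ`. -/
def bern (γ : ℝ) : Measure Bool :=
  ENNReal.ofReal γ • Measure.dirac true + ENNReal.ofReal (1 - γ) • Measure.dirac false

instance bern.isFiniteMeasure (γ : ℝ) : IsFiniteMeasure (bern γ) := by
  constructor
  simp only [bern, Measure.coe_add, Measure.coe_smul, Pi.add_apply, Pi.smul_apply,
    smul_eq_mul, measure_univ, mul_one]
  exact ENNReal.add_lt_top.mpr ⟨ENNReal.ofReal_lt_top, ENNReal.ofReal_lt_top⟩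

/-- The CP tensor `[A,B,C]`, with entries `∑ f, A i f * B j f * C k f`. -/
def cp {n1 n2 n3 F : ℕ} (A : Matrix (Fin n1) (Fin F) ℝ) (B : Matrix (Fin n2) (Fin F) ℝ)
    (C : Matrix (Fin n3) (Fin F) ℝ) : Fin n1 × Fin n2 × Fin n3 → ℝ :=
  fun t => ∑ f, A t.1 f * B t.2.1 f * C t.2.2 f

/-- `‖C‖₀`, the number of nonzero entries of a matrix. -/
def norm0 {n m : ℕ} (C : Matrix (Fin n) (Fin m) ℝ) : ℕ :=
  Set.ncard {q : Fin n × Fin m | C q.1 q.2 ≠ 0}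

/-- Kullback–Leibler divergence `D(p‖q)` between two densities w.r.t. a base measure `ν`. -/
def klD (ν : Measure ℝ) (p q : ℝ → ℝ) : ℝ := ∫ y, p y * Real.log (p y / q y) ∂ν

/-- Hellinger affinity `A(p,q)` between two densities w.r.t. a base measure `ν`. -/
def affin (ν : Measure ℝ) (p q : ℝ → ℝ) : ℝ := ∫ y, Real.sqrt (p y * q y) ∂ν

/-- A set of `L` equispaced points in `[-c, c]`. -/
def grid (c : ℝ) (L : ℕ) : Set ℝ := {x | ∃ l : Fin L, x = -c + l * (2 * c / ((L : ℝ) - 1))}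

/-- The number of quantization levels `L_lev = 2 ^ ⌈log₂ (n_max ^ β)⌉`. -/
def Llev (nmax : ℕ) (β : ℝ) : ℕ := 2 ^ (⌈Real.logb 2 ((nmax : ℝ) ^ β)⌉.toNat)

/-- `L_loc = 2 ^ ⌈log₂ (n3 * F)⌉`. -/
def Lloc (n3 F : ℕ) : ℕ := 2 ^ (⌈Real.logb 2 ((n3 * F : ℕ) : ℝ)⌉.toNat)

/-- Gaussian density with mean `μ` and variance `σ²`. -/
def gpdf (σ μ x : ℝ) : ℝ :=
  (Real.sqrt (2 * Real.pi * σ ^ 2))⁻¹ * Real.exp (-(x - μ) ^ 2 / (2 * σ ^ 2))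

/-- Maximum absolute entry of a matrix. -/
def matMaxAbs {α β : Type} [Fintype α] [Fintype β] (M : α → β → ℝ) : ℝ :=
  ⨆ q : α × β, |M q.1 q.2|

/-- Khatri–Rao (columnwise Kronecker) product. -/
def khatriRao {m n F : ℕ} (A : Matrix (Fin m) (Fin F) ℝ) (B : Matrix (Fin n) (Fin F) ℝ) :
    Matrix (Fin m × Fin n) (Fin F) ℝ := fun p f => A p.1 f * B p.2 f

lemma exp_neg_le_one_sub_half {x : ℝ} (h0 : 0 ≤ x) (h1 : x ≤ 1) :
    Real.exp (-x) ≤ 1 - x / 2 := by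
  have h2 : x + (1:ℝ) ≤ Real.exp x := Real.add_one_le_exp x
  have h3 : Real.exp (-x) * Real.exp x = 1 := by
    rw [← Real.exp_add]; simp
  nlinarith [Real.exp_pos x, Real.exp_pos (-x)]

lemma bern_prob {γ : ℝ} (h0 : 0 ≤ γ) (h1 : γ ≤ 1) : IsProbabilityMeasure (bern γ) := by
  constructor
  simp only [bern, Measure.coe_add, Measure.coe_smul, Pi.add_apply, Pi.smul_apply,
    smul_eq_mul, measure_univ, mul_one]
  rw [← ENNReal.ofReal_add h0 (by linarith), add_sub_cancel, ENNReal.ofReal_one]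

lemma bern_integral (γ : ℝ) (h0 : 0 ≤ γ) (h1 : γ ≤ 1) (g : Bool → ℝ) :
    ∫ s, g s ∂(bern γ) = γ * g true + (1 - γ) * g false := by
  haveI i1 : IsFiniteMeasure (ENNReal.ofReal γ • Measure.dirac (true : Bool)) := by
    constructor; simp [lt_top_iff_ne_top]
  haveI i2 : IsFiniteMeasure (ENNReal.ofReal (1-γ) • Measure.dirac (false : Bool)) := by
    constructor; simp [lt_top_iff_ne_top]
  rw [bern, integral_add_measure Integrable.of_finite Integrable.of_finite,
    integral_smul_measure, integral_smul_measure, integral_dirac, integral_dirac]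
  simp [ENNReal.toReal_ofReal h0, ENNReal.toReal_ofReal (by linarith : (0:ℝ) ≤ 1 - γ)]

lemma pi_integral_prod {ι : Type*} [Fintype ι] (m : Measure Bool) [IsFiniteMeasure m]
    (f : ι → Bool → ℝ) :
    ∫ x, ∏ i, f i (x i) ∂(Measure.pi fun _ : ι => m) = ∏ i, ∫ x, f i x ∂m := by
  letI : MeasureSpace Bool := ⟨m⟩
  exact MeasureTheory.integral_fintype_prod_eq_prod f


/-- Uniform lower-tail concentration bound over a finite class with Kraft–McMillan
penalties. -/
theorem uniform_lower_tail
    (𝒳 : Type) [Fintype 𝒳] (pen : 𝒳 → ℝ) (hpen : ∀ X, 1 ≤ pen X)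
    (hkraft : ∑ X : 𝒳, (2 : ℝ) ^ (-pen X) ≤ 1)
    (N : ℕ) (a : 𝒳 → Fin N → ℝ) (Q : ℝ) (hQ : 0 < Q)
    (ha : ∀ X i, 0 ≤ a X i ∧ a X i ≤ Q)
    (γ δ : ℝ) (hγ : γ ∈ Set.Ioo (0 : ℝ) 1) (hδ : δ ∈ Set.Ioo (0 : ℝ) 1)
    (Ω : Type) [MeasurableSpace Ω] (μ : Measure Ω) [IsProbabilityMeasure μ]
    (S : Ω → Fin N → Bool)
    (hlaw : Measure.map S μ = Measure.pi fun _ : Fin N => bern γ) :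
    μ {ω | ∃ X : 𝒳,
        (∑ i, if S ω i then a X i else 0)
          ≤ γ / 2 * (∑ i, a X i) - 4 * Q / 3 * (Real.log (1 / δ) + pen X * Real.log 2)}
      ≤ ENNReal.ofReal δ := by
  obtain ⟨hγ0, hγ1⟩ := hγ
  obtain ⟨hδ0, hδ1⟩ := hδ
  haveI hbp : IsProbabilityMeasure (bern γ) := bern_prob hγ0.le hγ1.le
  -- S is a.e.-measurable
  have hS : AEMeasurable S μ := by
    by_contra h
    rw [Measure.map_of_not_aemeasurable h] at hlaw
    have h0 : (Measure.pi fun _ : Fin N => bern γ) Set.univ = 0 := by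
      rw [← hlaw]; simp
    rw [measure_univ] at h0
    exact one_ne_zero h0
  set π : Measure (Fin N → Bool) := Measure.pi fun _ : Fin N => bern γ with hπ
  haveI : IsProbabilityMeasure π := by rw [hπ]; infer_instance
  set lam : ℝ := 3 / (4 * Q) with hlamdef
  have hlam : 0 < lam := by positivity
  set B : 𝒳 → Set (Fin N → Bool) := fun X =>
    {b | (∑ i, if b i then a X i else 0)
      ≤ γ / 2 * (∑ i, a X i) - 4 * Q / 3 * (Real.log (1 / δ) + pen X * Real.log 2)} with hB
  have hmeas : ∀ X, MeasurableSet (B X) := fun X => (Set.toFinite _).measurableSet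
  -- per-X Chernoff bound
  have key : ∀ X : 𝒳, π (B X) ≤ ENNReal.ofReal (δ * (2:ℝ) ^ (-pen X)) := by
    intro X
    set m : ℝ := ∑ i, a X i with hm
    set t : ℝ := 4 * Q / 3 * (Real.log (1 / δ) + pen X * Real.log 2) with ht
    set Z : (Fin N → Bool) → ℝ := fun b => ∑ i, if b i then a X i else 0 with hZ
    have hint : Integrable (fun b => Real.exp ((-lam) * Z b)) π := Integrable.of_finite
    have h1 := measure_le_le_exp_mul_mgf (X := Z) (μ := π) (t := -lam)
      (γ / 2 * m - t) (neg_nonpos.mpr hlam.le) hint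
    have hmgf : mgf Z π (-lam) = ∏ i, (γ * Real.exp (-lam * a X i) + (1 - γ)) := by
      have e1 : (fun b => Real.exp ((-lam) * Z b))
          = fun b => ∏ i, Real.exp ((-lam) * (if b i then a X i else 0)) := by
        funext b
        rw [← Real.exp_sum, hZ]
        congr 1
        rw [Finset.mul_sum]
      rw [mgf]
      show ∫ b, Real.exp ((-lam) * Z b) ∂π = _
      rw [e1, hπ,
        pi_integral_prod (ι := Fin N) (bern γ)
          (fun i s => Real.exp (-lam * if s then a X i else 0))]
      refine Finset.prod_congr rfl fun i _ => ?_
      rw [bern_integral γ hγ0.le hγ1.le]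
      simp
    have hfac : ∀ i : Fin N,
        γ * Real.exp (-lam * a X i) + (1 - γ) ≤ Real.exp (-(γ * (lam * a X i) / 2)) := by
      intro i
      obtain ⟨hai0, haiQ⟩ := ha X i
      have hx0 : 0 ≤ lam * a X i := by positivity
      have hx1 : lam * a X i ≤ 1 := by
        rw [hlamdef]
        rw [div_mul_eq_mul_div, div_le_one (by positivity)]
        nlinarith
      have h2 : Real.exp (-(lam * a X i)) ≤ 1 - (lam * a X i) / 2 :=
        exp_neg_le_one_sub_half hx0 hx1
      have h3 : γ * Real.exp (-(lam * a X i)) + (1 - γ) ≤ 1 - γ * (lam * a X i) / 2 := by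
        nlinarith
      have h4 : 1 - γ * (lam * a X i) / 2 ≤ Real.exp (-(γ * (lam * a X i) / 2)) := by
        have := Real.add_one_le_exp (-(γ * (lam * a X i) / 2))
        linarith
      calc γ * Real.exp (-lam * a X i) + (1 - γ)
          = γ * Real.exp (-(lam * a X i)) + (1 - γ) := by rw [neg_mul]
        _ ≤ 1 - γ * (lam * a X i) / 2 := h3
        _ ≤ Real.exp (-(γ * (lam * a X i) / 2)) := h4
    have hprod : ∏ i, (γ * Real.exp (-lam * a X i) + (1 - γ))
        ≤ Real.exp (-(γ * (lam * m) / 2)) := by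
      have : Real.exp (-(γ * (lam * m) / 2)) = ∏ i, Real.exp (-(γ * (lam * a X i) / 2)) := by
        rw [← Real.exp_sum]
        congr 1
        simp [hm, Finset.mul_sum, Finset.sum_div, Finset.sum_neg_distrib]
      rw [this]
      refine Finset.prod_le_prod (fun i _ => ?_) (fun i _ => hfac i)
      have := Real.exp_pos (-lam * a X i)
      nlinarith
    have hQne : Q ≠ 0 := ne_of_gt hQ
    have hfinal : Real.exp (-(-lam) * (γ / 2 * m - t)) * Real.exp (-(γ * (lam * m) / 2))
        = δ * (2:ℝ) ^ (-pen X) := by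
      rw [← Real.exp_add]
      have harg : -(-lam) * (γ / 2 * m - t) + -(γ * (lam * m) / 2) = -(lam * t) := by ring
      rw [harg]
      have hlt : lam * t = Real.log (1 / δ) + pen X * Real.log 2 := by
        rw [hlamdef, ht]; field_simp
      rw [hlt, neg_add, Real.exp_add]
      congr 1
      · rw [one_div, Real.log_inv, neg_neg, Real.exp_log hδ0]
      · rw [Real.rpow_def_of_pos (by norm_num : (0:ℝ) < 2)]
        congr 1
        ring
    have htr : (π (B X)).toReal ≤ δ * (2:ℝ) ^ (-pen X) := by
      have hBZ : B X = {b | Z b ≤ γ / 2 * m - t} := rfl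
      rw [hBZ]
      calc (π {b | Z b ≤ γ / 2 * m - t}).toReal
          ≤ Real.exp (-(-lam) * (γ / 2 * m - t)) * mgf Z π (-lam) := h1
        _ ≤ Real.exp (-(-lam) * (γ / 2 * m - t)) * Real.exp (-(γ * (lam * m) / 2)) := by
            rw [hmgf]
            exact mul_le_mul_of_nonneg_left hprod (Real.exp_pos _).le
        _ = δ * (2:ℝ) ^ (-pen X) := hfinal
    rw [ENNReal.le_ofReal_iff_toReal_le (measure_ne_top π _) (by positivity)]
    exact htr
  -- union bound
  have hset : {ω | ∃ X : 𝒳,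
      (∑ i, if S ω i then a X i else 0)
        ≤ γ / 2 * (∑ i, a X i) - 4 * Q / 3 * (Real.log (1 / δ) + pen X * Real.log 2)}
      = ⋃ X : 𝒳, S ⁻¹' (B X) := by
    ext ω
    simp [hB, Set.mem_iUnion]
  rw [hset]
  calc μ (⋃ X : 𝒳, S ⁻¹' (B X)) ≤ ∑' X : 𝒳, μ (S ⁻¹' (B X)) := measure_iUnion_le _
    _ = ∑ X : 𝒳, μ (S ⁻¹' (B X)) := tsum_fintype _
    _ = ∑ X : 𝒳, π (B X) := by
        refine Finset.sum_congr rfl fun X _ => ?_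
        rw [← Measure.map_apply_of_aemeasurable hS (hmeas X), hlaw]
    _ ≤ ∑ X : 𝒳, ENNReal.ofReal (δ * (2:ℝ) ^ (-pen X)) := Finset.sum_le_sum fun X _ => key X
    _ = ENNReal.ofReal (∑ X : 𝒳, δ * (2:ℝ) ^ (-pen X)) := by
        rw [ENNReal.ofReal_sum_of_nonneg fun X _ => by positivity]
    _ ≤ ENNReal.ofReal δ := by
        apply ENNReal.ofReal_le_ofReal
        rw [← Finset.mul_sum]
        nlinarith [Finset.sum_nonneg (fun X (_ : X ∈ Finset.univ) =>
          (Real.rpow_pos_of_pos (by norm_num : (0:ℝ) < 2) (-pen X)).le)]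
end
end

section
/- Let F ∈ ℕ and L ≥ 2 be real. Let A, A_Q ∈ ℝ^{n1×F}, B, B_Q ∈ ℝ^{n2×F}, C, C_Q ∈ ℝ^{n3×F} satisfy ‖A‖_∞ ≤ A_max, ‖B‖_∞ ≤ B_max, ‖C‖_∞ ≤ C_max and ‖A_Q − A‖_∞ ≤ A_max/(L−1), ‖B_Q − B‖_∞ ≤ B_max/(L−1), ‖C_Q − C‖_∞ ≤ C_max/(L−1). Then the CP tensors satisfy ‖[A_Q,B_Q,C_Q] − [A,B,C]‖_∞ ≤ F A_max B_max C_max [ (1 + 1/(L−1))³ − 1 ] ≤ 7 F A_max B_max C_max / (L−1). -/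
open MeasureTheory ProbabilityTheory

noncomputable section

lemma entry_abs_le {α β : Type} [Fintype α] [Fintype β] (M : α → β → ℝ) (a : α) (b : β) :
    |M a b| ≤ matMaxAbs M :=
  le_ciSup (f := fun q : α × β => |M q.1 q.2|)
    (Set.Finite.bddAbove (Set.finite_range _)) (a, b)

lemma matMaxAbs_nonneg {α β : Type} [Fintype α] [Fintype β] (M : α → β → ℝ) :
    0 ≤ matMaxAbs M :=
  Real.iSup_nonneg fun q => abs_nonneg _

/-- Entrywise effect of quantizing each CP factor to a uniform grid with `L` levels. -/
theorem cp_quantization_bound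
    (n1 n2 n3 F : ℕ) (L Amax Bmax Cmax : ℝ) (hL : 2 ≤ L)
    (A AQ : Matrix (Fin n1) (Fin F) ℝ) (B BQ : Matrix (Fin n2) (Fin F) ℝ)
    (C CQ : Matrix (Fin n3) (Fin F) ℝ)
    (hA : matMaxAbs A ≤ Amax) (hB : matMaxAbs B ≤ Bmax) (hC : matMaxAbs C ≤ Cmax)
    (hAQ : matMaxAbs (fun i f => AQ i f - A i f) ≤ Amax / (L - 1))
    (hBQ : matMaxAbs (fun j f => BQ j f - B j f) ≤ Bmax / (L - 1))
    (hCQ : matMaxAbs (fun k f => CQ k f - C k f) ≤ Cmax / (L - 1)) :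
    (∀ t, |cp AQ BQ CQ t - cp A B C t|
        ≤ F * Amax * Bmax * Cmax * ((1 + 1 / (L - 1)) ^ 3 - 1))
    ∧ F * Amax * Bmax * Cmax * ((1 + 1 / (L - 1)) ^ 3 - 1)
        ≤ 7 * F * Amax * Bmax * Cmax / (L - 1) := by
  have hLpos : (0:ℝ) < L - 1 := by linarith
  set δ : ℝ := 1 / (L - 1) with hδ
  have hδ0 : 0 ≤ δ := by positivity
  have hδ1 : δ ≤ 1 := by rw [hδ, div_le_one hLpos]; linarith
  have hAm : 0 ≤ Amax := le_trans (matMaxAbs_nonneg A) hA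
  have hBm : 0 ≤ Bmax := le_trans (matMaxAbs_nonneg B) hB
  have hCm : 0 ≤ Cmax := le_trans (matMaxAbs_nonneg C) hC
  have hdiv : ∀ x : ℝ, x / (L - 1) = x * δ := fun x => by rw [hδ]; ring
  constructor
  · rintro ⟨i, j, k⟩
    have term : ∀ f, |AQ i f * BQ j f * CQ k f - A i f * B j f * C k f|
        ≤ Amax * Bmax * Cmax * ((1 + δ) ^ 3 - 1) := by
      intro f
      have ha : |A i f| ≤ Amax := (entry_abs_le A i f).trans hA
      have hb : |B j f| ≤ Bmax := (entry_abs_le B j f).trans hB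
      have hc : |C k f| ≤ Cmax := (entry_abs_le C k f).trans hC
      have hda : |AQ i f - A i f| ≤ Amax * δ := by
        have := (entry_abs_le (fun i f => AQ i f - A i f) i f).trans hAQ
        rwa [hdiv] at this
      have hdb : |BQ j f - B j f| ≤ Bmax * δ := by
        have := (entry_abs_le (fun j f => BQ j f - B j f) j f).trans hBQ
        rwa [hdiv] at this
      have hdc : |CQ k f - C k f| ≤ Cmax * δ := by
        have := (entry_abs_le (fun k f => CQ k f - C k f) k f).trans hCQ
        rwa [hdiv] at this
      have haQ : |AQ i f| ≤ Amax * (1 + δ) := by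
        calc |AQ i f| = |A i f + (AQ i f - A i f)| := by ring_nf
          _ ≤ |A i f| + |AQ i f - A i f| := abs_add_le _ _
          _ ≤ Amax + Amax * δ := add_le_add ha hda
          _ = Amax * (1 + δ) := by ring
      have hbQ : |BQ j f| ≤ Bmax * (1 + δ) := by
        calc |BQ j f| = |B j f + (BQ j f - B j f)| := by ring_nf
          _ ≤ |B j f| + |BQ j f - B j f| := abs_add_le _ _
          _ ≤ Bmax + Bmax * δ := add_le_add hb hdb
          _ = Bmax * (1 + δ) := by ring
      have hcQ : |CQ k f| ≤ Cmax * (1 + δ) := by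
        calc |CQ k f| = |C k f + (CQ k f - C k f)| := by ring_nf
          _ ≤ |C k f| + |CQ k f - C k f| := abs_add_le _ _
          _ ≤ Cmax + Cmax * δ := add_le_add hc hdc
          _ = Cmax * (1 + δ) := by ring
      calc |AQ i f * BQ j f * CQ k f - A i f * B j f * C k f|
          = |(AQ i f - A i f) * BQ j f * CQ k f + A i f * (BQ j f - B j f) * CQ k f
              + A i f * B j f * (CQ k f - C k f)| := by ring_nf
        _ ≤ |(AQ i f - A i f) * BQ j f * CQ k f + A i f * (BQ j f - B j f) * CQ k f|
              + |A i f * B j f * (CQ k f - C k f)| := abs_add_le _ _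
        _ ≤ |(AQ i f - A i f) * BQ j f * CQ k f| + |A i f * (BQ j f - B j f) * CQ k f|
              + |A i f * B j f * (CQ k f - C k f)| := by
              exact add_le_add (abs_add_le _ _) le_rfl
        _ = |AQ i f - A i f| * |BQ j f| * |CQ k f| + |A i f| * |BQ j f - B j f| * |CQ k f|
              + |A i f| * |B j f| * |CQ k f - C k f| := by
              simp [abs_mul]
        _ ≤ (Amax * δ) * (Bmax * (1 + δ)) * (Cmax * (1 + δ))
              + Amax * (Bmax * δ) * (Cmax * (1 + δ)) + Amax * Bmax * (Cmax * δ) := by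
              gcongr <;> positivity
        _ = Amax * Bmax * Cmax * ((1 + δ) ^ 3 - 1) := by ring
    calc |cp AQ BQ CQ (i, j, k) - cp A B C (i, j, k)|
        = |∑ f, (AQ i f * BQ j f * CQ k f - A i f * B j f * C k f)| := by
          simp [cp, Finset.sum_sub_distrib]
      _ ≤ ∑ f, |AQ i f * BQ j f * CQ k f - A i f * B j f * C k f| :=
          Finset.abs_sum_le_sum_abs _ _
      _ ≤ ∑ _f : Fin F, Amax * Bmax * Cmax * ((1 + δ) ^ 3 - 1) :=
          Finset.sum_le_sum fun f _ => term f
      _ = F * Amax * Bmax * Cmax * ((1 + δ) ^ 3 - 1) := by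
          simp [Finset.sum_const, Finset.card_univ]; ring
  · have h7 : (1 + δ) ^ 3 - 1 ≤ 7 * δ := by nlinarith [sq_nonneg δ]
    calc (F : ℝ) * Amax * Bmax * Cmax * ((1 + δ) ^ 3 - 1)
        ≤ F * Amax * Bmax * Cmax * (7 * δ) := by
          apply mul_le_mul_of_nonneg_left h7; positivity
      _ = 7 * F * Amax * Bmax * Cmax / (L - 1) := by
          rw [hδ]; field_simp
end
end
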